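/- arXiv:1810.05390 — 2 statements merged into one kernel-verified Lean document; each statement's English description precedes it below -/
import Mathlib

section
/- Let (X, μ1, μ2) be a generalized bitopological space and let i, j ∈ {1,2} with i ≠ j. If A1 and A2 are μj-weakly separated sets, each of which is g_{μi}-open with respect to μj, then A1 ∪ A2 is g_{μi}-open with respect to μj. -/
open Set

/-- A generalized topology on `X`: contains `∅` and is closed under arbitrary unions. -/
def IsGenTop {X : Type*} (μ : Set (Set X)) : Prop :=
  ∅ ∈ μ ∧ ∀ S ⊆ μ, ⋃₀ S ∈ μ

/-- `A` is μ-closed iff its complement is μ-open. -/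
def gClosedSet {X : Type*} (μ : Set (Set X)) (A : Set X) : Prop := Aᶜ ∈ μ

/-- μ-closure: intersection of all μ-closed sets containing `A`. -/
def gCl {X : Type*} (μ : Set (Set X)) (A : Set X) : Set X :=
  ⋂₀ {F | gClosedSet μ F ∧ A ⊆ F}

/-- `A^∧_μ`: intersection of all μ-open sets containing `A`. -/
def wedgeOp {X : Type*} (μ : Set (Set X)) (A : Set X) : Set X :=
  ⋂₀ {U | U ∈ μ ∧ A ⊆ U}

/-- `A^∨_μ`: union of all μ-closed sets contained in `A`. -/
def veeOp {X : Type*} (μ : Set (Set X)) (A : Set X) : Set X :=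
  ⋃₀ {F | gClosedSet μ F ∧ F ⊆ A}

/-- `L` is a `∧_μ`-set. -/
def IsWedgeSet {X : Type*} (μ : Set (Set X)) (L : Set X) : Prop := L = wedgeOp μ L

/-- `M` is a `∨_μ`-set. -/
def IsVeeSet {X : Type*} (μ : Set (Set X)) (M : Set X) : Prop := M = veeOp μ M

/-- `A` is `g_{μi}`-closed with respect to `μj`. -/
def GClosedWrt {X : Type*} (μi μj : Set (Set X)) (A : Set X) : Prop :=
  ∀ U ∈ μj, A ⊆ U → gCl μi A ⊆ U

/-- `A` is `g_{μi}`-open with respect to `μj`. -/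
def GOpenWrt {X : Type*} (μi μj : Set (Set X)) (A : Set X) : Prop :=
  GClosedWrt μi μj Aᶜ

/-- `A` is `λ_{μi}`-closed with respect to `μj`. -/
def LamClosedWrt {X : Type*} (μi μj : Set (Set X)) (A : Set X) : Prop :=
  ∃ F L : Set X, gClosedSet μi F ∧ IsWedgeSet μj L ∧ A = F ∩ L

/-- `A` is `λ_{μi}`-open with respect to `μj`. -/
def LamOpenWrt {X : Type*} (μi μj : Set (Set X)) (A : Set X) : Prop :=
  LamClosedWrt μi μj Aᶜ

/-- `A` is pairwise `λ`-closed. -/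
def PairwiseLamClosed {X : Type*} (μ1 μ2 : Set (Set X)) (A : Set X) : Prop :=
  ∃ F1 F2 L1 L2 : Set X, gClosedSet μ1 F1 ∧ gClosedSet μ2 F2 ∧
    IsWedgeSet μ1 L1 ∧ IsWedgeSet μ2 L2 ∧ A = (F1 ∩ F2) ∩ (L1 ∩ L2)

def PairwiseT0 {X : Type*} (μ1 μ2 : Set (Set X)) : Prop :=
  ∀ x y : X, x ≠ y →
    (∃ U ∈ μ1, x ∈ U ∧ y ∉ U) ∨ (∃ V ∈ μ2, y ∈ V ∧ x ∉ V)

def PairwiseT1 {X : Type*} (μ1 μ2 : Set (Set X)) : Prop :=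
  ∀ x y : X, x ≠ y →
    (∃ U ∈ μ1, x ∈ U ∧ y ∉ U) ∧ (∃ V ∈ μ2, y ∈ V ∧ x ∉ V)

def PairwiseSymmetric {X : Type*} (μ1 μ2 : Set (Set X)) : Prop :=
  ∀ x y : X, (x ∈ gCl μ1 {y} → y ∈ gCl μ2 {x}) ∧ (x ∈ gCl μ2 {y} → y ∈ gCl μ1 {x})

def PairwiseTHalf {X : Type*} (μ1 μ2 : Set (Set X)) : Prop :=
  (∀ A : Set X, GClosedWrt μ1 μ2 A → gClosedSet μ1 A) ∧
  (∀ A : Set X, GClosedWrt μ2 μ1 A → gClosedSet μ2 A)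

def PairwiseR0 {X : Type*} (μ1 μ2 : Set (Set X)) : Prop :=
  (∀ G ∈ μ1, ∀ x ∈ G, gCl μ2 {x} ⊆ G) ∧ (∀ G ∈ μ2, ∀ x ∈ G, gCl μ1 {x} ⊆ G)

def PairwiseLamSymmetric {X : Type*} (μ1 μ2 : Set (Set X)) : Prop :=
  ∀ A : Set X, PairwiseLamClosed μ1 μ2 A →
    LamClosedWrt μ1 μ2 A ∧ LamClosedWrt μ2 μ1 A

/-- `A` and `B` are μ-weakly separated. -/
def MuWeaklySeparated {X : Type*} (μ : Set (Set X)) (A B : Set X) : Prop :=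
  ∃ U ∈ μ, ∃ V ∈ μ, A ⊆ U ∧ B ⊆ V ∧ A ∩ V = ∅ ∧ B ∩ U = ∅

def PairwiseTQuarter {X : Type*} (μ1 μ2 : Set (Set X)) : Prop :=
  ∀ P : Set X, P.Finite → ∀ y ∉ P,
    ∃ A : Set X, P ⊆ A ∧ y ∉ A ∧
      (A ∈ μ1 ∨ A ∈ μ2 ∨ gClosedSet μ1 A ∨ gClosedSet μ2 A)

def PairwiseTThreeEighths {X : Type*} (μ1 μ2 : Set (Set X)) : Prop :=
  ∀ P : Set X, P.Countable → ∀ y ∉ P,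
    ∃ A : Set X, P ⊆ A ∧ y ∉ A ∧
      (A ∈ μ1 ∨ A ∈ μ2 ∨ gClosedSet μ1 A ∨ gClosedSet μ2 A)

def PairwiseTFiveEighths {X : Type*} (μ1 μ2 : Set (Set X)) : Prop :=
  ∀ P : Set X, ∀ y ∉ P,
    ∃ A : Set X, P ⊆ A ∧ y ∉ A ∧
      (A ∈ μ1 ∨ A ∈ μ2 ∨ gClosedSet μ1 A ∨ gClosedSet μ2 A)
lemma gCl_mono {X : Type*} (μ : Set (Set X)) {A B : Set X} (h : A ⊆ B) :
    gCl μ A ⊆ gCl μ B := fun x hx => by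
  intro F hF
  exact hx F ⟨hF.1, h.trans hF.2⟩

lemma union_mem {X : Type*} {μ : Set (Set X)} (hμ : IsGenTop μ) {U V : Set X}
    (hU : U ∈ μ) (hV : V ∈ μ) : U ∪ V ∈ μ := by
  have := hμ.2 {U, V} (by intro S hS; rcases hS with rfl | rfl <;> assumption)
  simpa using this

theorem stmt2 {X : Type*} (μ : Fin 2 → Set (Set X)) (hμ : ∀ k, IsGenTop (μ k))
    (i j : Fin 2) (hij : i ≠ j) (A1 A2 : Set X)
    (hsep : MuWeaklySeparated (μ j) A1 A2)
    (h1 : GOpenWrt (μ i) (μ j) A1) (h2 : GOpenWrt (μ i) (μ j) A2) :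
    GOpenWrt (μ i) (μ j) (A1 ∪ A2) := by
  intro W hW hsub
  obtain ⟨U, hU, V, hV, hA1U, hA2V, hA1V, hA2U⟩ := hsep
  have hWV : W ∪ V ∈ μ j := union_mem (hμ j) hW hV
  have hWU : W ∪ U ∈ μ j := union_mem (hμ j) hW hU
  have h1' : gCl (μ i) A1ᶜ ⊆ W ∪ V := by
    apply h1 _ hWV
    intro x hx
    by_cases hx2 : x ∈ A2
    · right; exact hA2V hx2
    · left; apply hsub; intro h; rcases h with h | h; exacts [hx h, hx2 h]
  have h2' : gCl (μ i) A2ᶜ ⊆ W ∪ U := by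
    apply h2 _ hWU
    intro x hx
    by_cases hx1 : x ∈ A1
    · right; exact hA1U hx1
    · left; apply hsub; intro h; rcases h with h | h; exacts [hx1 h, hx h]
  intro x hx
  have hxc : x ∈ gCl (μ i) A1ᶜ ∩ gCl (μ i) A2ᶜ := by
    constructor
    · exact gCl_mono _ (by intro y hy h; exact hy (Or.inl h)) hx
    · exact gCl_mono _ (by intro y hy h; exact hy (Or.inr h)) hx
  rcases h1' hxc.1 with h | hv
  · exact h
  rcases h2' hxc.2 with h | hu
  · exact h
  apply hsub
  intro h
  rcases h with h | h
  · exact (Set.eq_empty_iff_forall_notMem.mp hA1V x) ⟨h, hv⟩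
  · exact (Set.eq_empty_iff_forall_notMem.mp hA2U x) ⟨h, hu⟩
end

section
/- A generalized bitopological space (X, μ1, μ2) is pairwise T_{1/2} if and only if for all i, j ∈ {1,2} with i ≠ j and every x ∈ X, if the singleton {x} is not μj-closed then {x} is μi-open. -/
open Set

lemma gCl_closed' {X : Type*} (μ : Set (Set X)) (h : IsGenTop μ) (A : Set X) :
    gClosedSet μ (gCl μ A) := by
  have hU : ⋃₀ {U | U ∈ μ ∧ A ⊆ Uᶜ} ∈ μ := h.2 _ (fun U hU => hU.1)
  have : (gCl μ A)ᶜ = ⋃₀ {U | U ∈ μ ∧ A ⊆ Uᶜ} := by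
    ext x
    simp only [gCl, mem_compl_iff, mem_sInter, mem_setOf_eq, not_forall, mem_sUnion]
    constructor
    · rintro ⟨F, ⟨hF, hAF⟩, hxF⟩
      exact ⟨Fᶜ, ⟨hF, by simpa using hAF⟩, hxF⟩
    · rintro ⟨U, ⟨hU, hAU⟩, hxU⟩
      exact ⟨Uᶜ, ⟨by simpa [gClosedSet] using hU, hAU⟩, by simpa using hxU⟩
  rw [gClosedSet, this]; exact hU

lemma aux_half {X : Type*} (μi μj : Set (Set X)) (hi : IsGenTop μi) :
    (∀ A : Set X, GClosedWrt μi μj A → gClosedSet μi A) ↔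
      (∀ x : X, ¬ gClosedSet μj {x} → {x} ∈ μi) := by
  constructor
  · intro h x hx
    have hg : GClosedWrt μi μj {x}ᶜ := by
      intro U hU hsub
      rcases eq_or_ne U {x}ᶜ with rfl | hne
      · exact absurd (by simpa [gClosedSet] using hU) hx
      · have hx' : x ∈ U := by
          by_contra hxU
          exact hne (subset_antisymm (fun y hy => by
            simp only [mem_compl_iff, mem_singleton_iff]
            rintro rfl; exact hxU hy) hsub)
        intro y _
        rcases eq_or_ne y x with rfl | hyx
        · exact hx'
        · exact hsub (by simpa using hyx)
    have := h _ hg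
    simpa [gClosedSet] using this
  · intro h A hA
    have hsub : gCl μi A ⊆ A := by
      intro x hx
      by_contra hxA
      by_cases hc : gClosedSet μj {x}
      · have : gCl μi A ⊆ {x}ᶜ :=
          hA _ hc (fun y hy => by
            simp only [mem_compl_iff, mem_singleton_iff]
            rintro rfl; exact hxA hy)
        exact this hx rfl
      · have hxo : {x} ∈ μi := h x hc
        have : x ∈ ({x}ᶜ : Set X) := hx _ ⟨by simpa [gClosedSet] using hxo,
          fun y hy => by
            simp only [mem_compl_iff, mem_singleton_iff]
            rintro rfl; exact hxA hy⟩
        exact this rfl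
    have heq : gCl μi A = A :=
      subset_antisymm hsub (fun x hx F hF => hF.2 hx)
    rw [gClosedSet, ← heq]
    exact gCl_closed' μi hi A

theorem stmt6 {X : Type*} (μ1 μ2 : Set (Set X))
    (h1 : IsGenTop μ1) (h2 : IsGenTop μ2) :
    PairwiseTHalf μ1 μ2 ↔
      ((∀ x : X, ¬ gClosedSet μ2 {x} → {x} ∈ μ1) ∧
       (∀ x : X, ¬ gClosedSet μ1 {x} → {x} ∈ μ2)) := by
  exact and_congr (aux_half μ1 μ2 h1) (aux_half μ2 μ1 h2)
end
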